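/- Let A ∈ ℝ^{m×n}, let H ∈ ℝ^{n×n} be symmetric positive definite, and let R_d ∈ ℝ^{m×m} be symmetric positive definite. Then the symmetric (n+m)×(n+m) matrix M = [[−H, Aᵀ],[A, R_d]] is nonsingular and has exactly n strictly negative eigenvalues and exactly m strictly positive eigenvalues, counted with multiplicity. -/

import Mathlib

open Matrix Finset Module

section Aux

variable {N : Type*} [Fintype N] [DecidableEq N]

lemma quad_eq' (M : Matrix N N ℝ) (hM : M.IsHermitian) (x : EuclideanSpace ℝ N) :
    x ⬝ᵥ (M *ᵥ x) = ∑ i, hM.eigenvalues i * (hM.eigenvectorBasis.repr x i)^2 := by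
  set b := hM.eigenvectorBasis with hb
  have h1 : (WithLp.toLp 2 (M *ᵥ x) : EuclideanSpace ℝ N) = ∑ i, (b.repr x i * hM.eigenvalues i) • (b i) := by
    conv_lhs => rw [← b.sum_repr x]
    rw [show (WithLp.toLp 2 (M *ᵥ WithLp.ofLp (∑ i, b.repr x i • b i)) : EuclideanSpace ℝ N)
        = WithLp.toLp 2 (M.mulVecLin (∑ i, b.repr x i • b i).ofLp) from rfl]
    rw [WithLp.ofLp_sum, map_sum, WithLp.toLp_sum]
    congr 1; ext i j
    have h4 := congrFun (hM.mulVec_eigenvectorBasis i) j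
    simp only [Pi.smul_apply, smul_eq_mul] at h4 ⊢
    erw [_root_.map_smul]
    simp only [Pi.smul_apply, smul_eq_mul, Matrix.mulVecLin_apply]
    erw [h4]
    show _ = (b.repr x i * hM.eigenvalues i) * (hM.eigenvectorBasis i) j
    simp [mul_assoc]
  have h2 : x ⬝ᵥ (M *ᵥ x) = inner (𝕜 := ℝ) x (WithLp.toLp 2 (M *ᵥ x) : EuclideanSpace ℝ N) := by
    simp [PiLp.inner_apply, dotProduct, mul_comm]
  rw [h2, h1, inner_sum]
  congr 1; ext i
  have h5 : inner (𝕜 := ℝ) x (b i) = b.repr x i := by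
    rw [real_inner_comm]; exact (b.repr_apply_apply x i).symm
  rw [real_inner_smul_right, h5]; ring

lemma count_neg_ge (M : Matrix N N ℝ) (hM : M.IsHermitian)
    (W : Submodule ℝ (EuclideanSpace ℝ N))
    (hW : ∀ x ∈ W, x ≠ 0 → x ⬝ᵥ (M *ᵥ x) < 0) :
    Module.finrank ℝ W ≤ (univ.filter fun i => hM.eigenvalues i < 0).card := by
  classical
  set b := hM.eigenvectorBasis with hb
  set S : Finset N := univ.filter (fun i => ¬ hM.eigenvalues i < 0) with hS
  set P : Submodule ℝ (EuclideanSpace ℝ N) :=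
    Submodule.span ℝ (Set.range (fun i : {i // i ∈ S} => b i)) with hP
  have hrepr0 : ∀ x ∈ P, ∀ j, hM.eigenvalues j < 0 → b.repr x j = 0 := by
    intro x hx j hj
    induction hx using Submodule.span_induction with
    | mem y hy =>
      obtain ⟨⟨i, hiS⟩, rfl⟩ := hy
      have hij : j ≠ i := by
        intro h; subst h
        simp only [hS, mem_filter] at hiS
        exact hiS.2 hj
      rw [b.repr_self]
      simp [EuclideanSpace.single, hij]
    | zero => simp
    | add y z _ _ hy hz => simp [map_add, hy, hz]
    | smul a y _ hy => simp [_root_.map_smul, hy]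
  have hli : LinearIndependent ℝ (fun i : {i // i ∈ S} => b i) := by
    have h := b.toBasis.linearIndependent
    rw [OrthonormalBasis.coe_toBasis] at h
    exact h.comp _ Subtype.val_injective
  have hPrank : finrank ℝ P = S.card := by
    rw [hP, finrank_span_eq_card hli]
    exact Fintype.card_coe S
  have hdisj : W ⊓ P = ⊥ := by
    rw [Submodule.eq_bot_iff]
    rintro x ⟨hxW, hxP⟩
    by_contra hx0
    have h1 := hW x hxW hx0
    have h2 : 0 ≤ x ⬝ᵥ (M *ᵥ x) := by
      rw [quad_eq' M hM x]
      apply Finset.sum_nonneg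
      intro i _
      by_cases hi : hM.eigenvalues i < 0
      · rw [hrepr0 x hxP i hi]; simp
      · exact mul_nonneg (not_lt.1 hi) (sq_nonneg _)
    linarith
  have hsum := Submodule.finrank_sup_add_finrank_inf_eq W P
  rw [hdisj, finrank_bot] at hsum
  have hle : finrank ℝ ↥(W ⊔ P) ≤ Fintype.card N := by
    have := Submodule.finrank_le (W ⊔ P)
    simpa [finrank_euclideanSpace] using this
  have hcard : (univ.filter fun i => hM.eigenvalues i < 0).card + S.card = Fintype.card N := by
    rw [hS]
    simpa using Finset.card_filter_add_card_filter_not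
      (s := (univ : Finset N)) (p := fun i => hM.eigenvalues i < 0)
  omega

lemma count_pos_ge (M : Matrix N N ℝ) (hM : M.IsHermitian)
    (W : Submodule ℝ (EuclideanSpace ℝ N))
    (hW : ∀ x ∈ W, x ≠ 0 → 0 < x ⬝ᵥ (M *ᵥ x)) :
    Module.finrank ℝ W ≤ (univ.filter fun i => 0 < hM.eigenvalues i).card := by
  classical
  set b := hM.eigenvectorBasis with hb
  set S : Finset N := univ.filter (fun i => ¬ 0 < hM.eigenvalues i) with hS
  set P : Submodule ℝ (EuclideanSpace ℝ N) :=
    Submodule.span ℝ (Set.range (fun i : {i // i ∈ S} => b i)) with hP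
  have hrepr0 : ∀ x ∈ P, ∀ j, 0 < hM.eigenvalues j → b.repr x j = 0 := by
    intro x hx j hj
    induction hx using Submodule.span_induction with
    | mem y hy =>
      obtain ⟨⟨i, hiS⟩, rfl⟩ := hy
      have hij : j ≠ i := by
        intro h; subst h
        simp only [hS, mem_filter] at hiS
        exact hiS.2 hj
      rw [b.repr_self]
      simp [EuclideanSpace.single, hij]
    | zero => simp
    | add y z _ _ hy hz => simp [map_add, hy, hz]
    | smul a y _ hy => simp [_root_.map_smul, hy]
  have hli : LinearIndependent ℝ (fun i : {i // i ∈ S} => b i) := by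
    have h := b.toBasis.linearIndependent
    rw [OrthonormalBasis.coe_toBasis] at h
    exact h.comp _ Subtype.val_injective
  have hPrank : finrank ℝ P = S.card := by
    rw [hP, finrank_span_eq_card hli]
    exact Fintype.card_coe S
  have hdisj : W ⊓ P = ⊥ := by
    rw [Submodule.eq_bot_iff]
    rintro x ⟨hxW, hxP⟩
    by_contra hx0
    have h1 := hW x hxW hx0
    have h2 : x ⬝ᵥ (M *ᵥ x) ≤ 0 := by
      rw [quad_eq' M hM x]
      apply Finset.sum_nonpos
      intro i _
      by_cases hi : 0 < hM.eigenvalues i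
      · rw [hrepr0 x hxP i hi]; simp
      · exact mul_nonpos_of_nonpos_of_nonneg (not_lt.1 hi) (sq_nonneg _)
    linarith
  have hsum := Submodule.finrank_sup_add_finrank_inf_eq W P
  rw [hdisj, finrank_bot] at hsum
  have hle : finrank ℝ ↥(W ⊔ P) ≤ Fintype.card N := by
    have := Submodule.finrank_le (W ⊔ P)
    simpa [finrank_euclideanSpace] using this
  have hcard : (univ.filter fun i => 0 < hM.eigenvalues i).card + S.card = Fintype.card N := by
    rw [hS]
    simpa using Finset.card_filter_add_card_filter_not
      (s := (univ : Finset N)) (p := fun i => 0 < hM.eigenvalues i)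
  omega

end Aux

/-- With `H` and `R_d` symmetric positive definite, the symmetric matrix
`M = [[−H, Aᵀ],[A, R_d]]` is nonsingular and has exactly `n` strictly negative and
exactly `m` strictly positive eigenvalues, counted with multiplicity. -/
theorem stmt_14 {m n : ℕ} (A : Matrix (Fin m) (Fin n) ℝ)
    (H : Matrix (Fin n) (Fin n) ℝ) (hH : H.PosDef)
    (Rd : Matrix (Fin m) (Fin m) ℝ) (hRd : Rd.PosDef)
    (M : Matrix (Fin n ⊕ Fin m) (Fin n ⊕ Fin m) ℝ)
    (hMdef : M = Matrix.fromBlocks (-H) Aᵀ A Rd)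
    (hM : M.IsHermitian) :
    M.det ≠ 0 ∧
    (Finset.univ.filter fun i => hM.eigenvalues i < 0).card = n ∧
    (Finset.univ.filter fun i => 0 < hM.eigenvalues i).card = m := by
  classical
  have hdet : IsUnit H.det := isUnit_iff_ne_zero.2 (ne_of_gt hH.det_pos)
  -- negative subspace
  let fneg : EuclideanSpace ℝ (Fin n) →ₗ[ℝ] EuclideanSpace ℝ (Fin n ⊕ Fin m) :=
    { toFun := fun x => WithLp.toLp 2 (Sum.elim x 0 : Fin n ⊕ Fin m → ℝ)
      map_add' := by intro x y; ext i; cases i <;> simp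
      map_smul' := by intro c x; ext i; cases i <;> simp }
  have hfneg_inj : Function.Injective fneg := by
    intro x y h
    ext i
    exact congrFun (congrArg WithLp.ofLp h) (Sum.inl i)
  have hn : n ≤ (Finset.univ.filter fun i => hM.eigenvalues i < 0).card := by
    have := count_neg_ge M hM (LinearMap.range fneg) (by
      rintro x ⟨u, rfl⟩ hx0
      have hu : u ≠ 0 := by
        intro h; apply hx0; rw [h]; exact map_zero fneg
      show (Sum.elim u 0 : Fin n ⊕ Fin m → ℝ) ⬝ᵥ (M *ᵥ Sum.elim u 0) < 0
      rw [hMdef, fromBlocks_mulVec, sumElim_dotProduct_sumElim]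
      have h1 := hH.dotProduct_mulVec_pos (x := u.ofLp) (fun h => hu (by ext i; simpa using congrFun h i))
      simp only [star_trivial] at h1
      simp [Matrix.neg_mulVec]
      linarith)
    rwa [LinearMap.finrank_range_of_inj hfneg_inj, finrank_euclideanSpace,
      Fintype.card_fin] at this
  -- positive subspace
  let g0 : (Fin m → ℝ) →ₗ[ℝ] ((Fin n ⊕ Fin m) → ℝ) :=
    LinearMap.pi (Sum.rec (fun i => (LinearMap.proj i).comp (H⁻¹ * Aᵀ).mulVecLin)
      (fun j => LinearMap.proj j))
  let gpos : EuclideanSpace ℝ (Fin m) →ₗ[ℝ] EuclideanSpace ℝ (Fin n ⊕ Fin m) :=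
    { toFun := fun y => WithLp.toLp 2 (g0 y)
      map_add' := fun x y => by simp
      map_smul' := fun c x => by simp }
  have hgpos_inj : Function.Injective gpos := by
    intro x y h
    ext i
    exact congrFun (congrArg WithLp.ofLp h) (Sum.inr i)
  have hm : m ≤ (Finset.univ.filter fun i => 0 < hM.eigenvalues i).card := by
    have := count_pos_ge M hM (LinearMap.range gpos) (by
      rintro x ⟨y, rfl⟩ hx0
      have hy : y ≠ 0 := by
        intro h; apply hx0; rw [h]; exact map_zero gpos
      set u : Fin n → ℝ := (H⁻¹ * Aᵀ) *ᵥ y with hu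
      have hHu : H *ᵥ u = Aᵀ *ᵥ y := by
        rw [hu, Matrix.mulVec_mulVec, ← Matrix.mul_assoc,
          Matrix.mul_nonsing_inv _ hdet, Matrix.one_mul]
      have hg : (gpos y : (Fin n ⊕ Fin m) → ℝ) = Sum.elim u y := by
        funext i; cases i <;> rfl
      show (gpos y : (Fin n ⊕ Fin m) → ℝ) ⬝ᵥ (M *ᵥ (gpos y : (Fin n ⊕ Fin m) → ℝ)) > 0
      rw [hg, hMdef, fromBlocks_mulVec, sumElim_dotProduct_sumElim]
      simp only [Sum.elim_comp_inl, Sum.elim_comp_inr]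
      have h1 : u ⬝ᵥ ((-H) *ᵥ u + Aᵀ *ᵥ y) = 0 := by
        rw [Matrix.neg_mulVec, hHu]
        simp
      have h2 : y ⬝ᵥ (A *ᵥ u) = u ⬝ᵥ (H *ᵥ u) := by
        rw [Matrix.dotProduct_mulVec, ← Matrix.mulVec_transpose, hHu,
          dotProduct_comm]
      have h3 : 0 ≤ u ⬝ᵥ (H *ᵥ u) := by
        have := hH.posSemidef.dotProduct_mulVec_nonneg u
        simpa using this
      have h4 : 0 < y ⬝ᵥ (Rd *ᵥ y) := by
        have := hRd.dotProduct_mulVec_pos (x := y.ofLp) (fun h => hy (by ext i; simpa using congrFun h i))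
        simpa using this
      rw [h1, dotProduct_add, h2]
      linarith)
    rwa [LinearMap.finrank_range_of_inj hgpos_inj, finrank_euclideanSpace,
      Fintype.card_fin] at this
  -- combine
  set Fneg := (Finset.univ.filter fun i => hM.eigenvalues i < 0) with hFneg
  set Fpos := (Finset.univ.filter fun i => 0 < hM.eigenvalues i) with hFpos
  have hdisjF : Disjoint Fneg Fpos := by
    rw [Finset.disjoint_left]
    intro a ha hb
    rw [hFneg, Finset.mem_filter] at ha
    rw [hFpos, Finset.mem_filter] at hb
    linarith [ha.2, hb.2]
  have hcardU : (Finset.univ : Finset (Fin n ⊕ Fin m)).card = n + m := by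
    simp [Fintype.card_sum]
  have hunion : (Fneg ∪ Fpos).card = Fneg.card + Fpos.card :=
    Finset.card_union_of_disjoint hdisjF
  have hle : Fneg.card + Fpos.card ≤ n + m := by
    rw [← hunion, ← hcardU]
    exact Finset.card_le_card (Finset.subset_univ _)
  have hFnegcard : Fneg.card = n := by omega
  have hFposcard : Fpos.card = m := by omega
  refine ⟨?_, hFnegcard, hFposcard⟩
  have huniv : Fneg ∪ Fpos = Finset.univ := by
    apply Finset.eq_univ_of_card
    have hc : Fintype.card (Fin n ⊕ Fin m) = n + m := by simp
    omega
  have hne : ∀ i, hM.eigenvalues i ≠ 0 := by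
    intro i
    have : i ∈ Fneg ∪ Fpos := huniv ▸ Finset.mem_univ i
    rw [Finset.mem_union, hFneg, hFpos, Finset.mem_filter, Finset.mem_filter] at this
    rcases this with h | h
    · exact ne_of_lt h.2
    · exact ne_of_gt h.2
  have hprod : ∏ i, hM.eigenvalues i ≠ 0 := Finset.prod_ne_zero_iff.2 fun i _ => hne i
  rw [hM.det_eq_prod_eigenvalues]
  exact_mod_cast hprod
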